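/- Let A ∈ M_{n×n}(ℂ) be a nilpotent matrix and let m ≥ 1 be a natural number. Then the ℂ-dimension of the linear span of the set { A^m · B : B ∈ M_{n×n}(ℂ), A·B = B·A } is at most n²/m. -/

import Mathlib

open Module Submodule LinearMap

set_option synthInstance.maxHeartbeats 1000000
set_option maxHeartbeats 1600000

namespace DimSpanAux

variable {n : ℕ} (f : (Fin n → ℂ) →ₗ[ℂ] (Fin n → ℂ))

/-- `e f s` is the dimension of `ker f ⊓ range (f^s)`. -/
noncomputable def e (s : ℕ) : ℕ :=
  Module.finrank ℂ ↥(LinearMap.ker f ⊓ LinearMap.range (f ^ s))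

lemma range_pow_le (s t : ℕ) (h : s ≤ t) :
    LinearMap.range (f ^ t) ≤ LinearMap.range (f ^ s) := by
  obtain ⟨d, rfl⟩ := Nat.exists_eq_add_of_le h
  rw [pow_add, Module.End.mul_eq_comp]
  exact LinearMap.range_comp_le_range _ _

lemma ker_pow_le (s t : ℕ) (h : s ≤ t) :
    LinearMap.ker (f ^ s) ≤ LinearMap.ker (f ^ t) := by
  obtain ⟨d, hd⟩ := Nat.exists_eq_add_of_le h
  subst hd
  rw [add_comm, pow_add, Module.End.mul_eq_comp]
  exact LinearMap.ker_le_ker_comp _ _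

lemma e_antitone (s t : ℕ) (h : s ≤ t) : e f t ≤ e f s :=
  Submodule.finrank_mono (inf_le_inf_left _ (range_pow_le f s t h))

/-- rank-nullity for a restriction. -/
lemma finrank_restrict' {M : Type} [AddCommGroup M] [Module ℂ M] [FiniteDimensional ℂ M]
    (g : M →ₗ[ℂ] M) (p : Submodule ℂ M) :
    Module.finrank ℂ ↥p
      = Module.finrank ℂ ↥(p.map g) + Module.finrank ℂ ↥(LinearMap.ker g ⊓ p) := by
  have h := LinearMap.finrank_range_add_finrank_ker (g.domRestrict p)
  rw [LinearMap.range_domRestrict] at h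
  have e1 : LinearMap.ker (g.domRestrict p) = Submodule.comap p.subtype (LinearMap.ker g ⊓ p) := by
    rw [LinearMap.ker_domRestrict, Submodule.comap_inf, Submodule.comap_subtype_self, inf_top_eq]
  have e2 : Module.finrank ℂ ↥(Submodule.comap p.subtype (LinearMap.ker g ⊓ p))
      = Module.finrank ℂ ↥(LinearMap.ker g ⊓ p) :=
    (Submodule.comapSubtypeEquivOfLe (inf_le_right : LinearMap.ker g ⊓ p ≤ p)).finrank_eq
  rw [e1, e2] at h
  omega

lemma finrank_restrict (g : (Fin n → ℂ) →ₗ[ℂ] (Fin n → ℂ)) (p : Submodule ℂ (Fin n → ℂ)) :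
    Module.finrank ℂ ↥p
      = Module.finrank ℂ ↥(p.map g) + Module.finrank ℂ ↥(LinearMap.ker g ⊓ p) :=
  finrank_restrict' g p

lemma map_pow_ker_succ (j : ℕ) :
    (LinearMap.ker (f ^ (j + 1))).map (f ^ j)
      = LinearMap.ker f ⊓ LinearMap.range (f ^ j) := by
  ext x
  simp only [Submodule.mem_map, LinearMap.mem_ker, Submodule.mem_inf, LinearMap.mem_range]
  constructor
  · rintro ⟨y, hy, rfl⟩
    refine ⟨?_, ⟨y, rfl⟩⟩
    have : (f ^ (j + 1)) y = f ((f ^ j) y) := by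
      rw [pow_succ', Module.End.mul_apply]
    rw [← this, hy]
  · rintro ⟨hx, y, rfl⟩
    refine ⟨y, ?_, rfl⟩
    rw [pow_succ', Module.End.mul_apply, hx]

lemma map_f_ker_succ (j : ℕ) :
    (LinearMap.ker (f ^ (j + 1))).map f = LinearMap.range f ⊓ LinearMap.ker (f ^ j) := by
  ext x
  simp only [Submodule.mem_map, LinearMap.mem_ker, Submodule.mem_inf, LinearMap.mem_range]
  constructor
  · rintro ⟨y, hy, rfl⟩
    refine ⟨⟨y, rfl⟩, ?_⟩
    have : (f ^ (j + 1)) y = (f ^ j) (f y) := by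
      rw [pow_succ, Module.End.mul_apply]
    rw [← this, hy]
  · rintro ⟨⟨y, rfl⟩, hx⟩
    refine ⟨y, ?_, rfl⟩
    rw [pow_succ, Module.End.mul_apply, hx]

lemma map_f_range_succ (j : ℕ) :
    (LinearMap.range (f ^ j)).map f = LinearMap.range (f ^ (j + 1)) := by
  rw [pow_succ', Module.End.mul_eq_comp, LinearMap.range_comp]

lemma finrank_range_step (j : ℕ) :
    Module.finrank ℂ ↥(LinearMap.range (f ^ j))
      = Module.finrank ℂ ↥(LinearMap.range (f ^ (j + 1))) + e f j := by
  have h := finrank_restrict f (LinearMap.range (f ^ j))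
  rw [map_f_range_succ] at h
  have : LinearMap.ker f ⊓ LinearMap.range (f ^ j)
      = LinearMap.ker f ⊓ LinearMap.range (f ^ j) := rfl
  rw [h]; rfl

lemma finrank_ker_step (j : ℕ) :
    Module.finrank ℂ ↥(LinearMap.ker (f ^ (j + 1)))
      = Module.finrank ℂ ↥(LinearMap.ker (f ^ j)) + e f j := by
  have h := finrank_restrict (f ^ j) (LinearMap.ker (f ^ (j + 1)))
  rw [map_pow_ker_succ] at h
  have h2 : LinearMap.ker (f ^ j) ⊓ LinearMap.ker (f ^ (j + 1)) = LinearMap.ker (f ^ j) :=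
    inf_eq_left.mpr (ker_pow_le f j (j+1) (Nat.le_succ j))
  rw [h2] at h
  unfold e
  omega

lemma finrank_ker_f_le (j : ℕ) :
    LinearMap.ker f ≤ LinearMap.ker (f ^ (j + 1)) := by
  have := ker_pow_le f 1 (j + 1) (Nat.one_le_iff_ne_zero.mpr (Nat.succ_ne_zero j))
  rwa [pow_one] at this

lemma finrank_sup_eq (j : ℕ) :
    Module.finrank ℂ ↥(LinearMap.range f ⊔ LinearMap.ker (f ^ j)) + e f j = n := by
  have hsup := Submodule.finrank_sup_add_finrank_inf_eq
    (LinearMap.range f) (LinearMap.ker (f ^ j))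
  -- inf = map f (ker f^{j+1})
  have hinf : LinearMap.range f ⊓ LinearMap.ker (f ^ j)
      = (LinearMap.ker (f ^ (j + 1))).map f := (map_f_ker_succ f j).symm
  -- rank-nullity on the restriction of f to ker f^{j+1}
  have hrn := finrank_restrict f (LinearMap.ker (f ^ (j + 1)))
  have hker : LinearMap.ker f ⊓ LinearMap.ker (f ^ (j + 1)) = LinearMap.ker f :=
    inf_eq_left.mpr (finrank_ker_f_le f j)
  rw [hker] at hrn
  have hks := finrank_ker_step f j
  have hrnf := LinearMap.finrank_range_add_finrank_ker f
  have hfin : Module.finrank ℂ (Fin n → ℂ) = n := by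
    simp [Module.finrank_fintype_fun_eq_card]
  rw [hfin] at hrnf
  -- kernels of powers are ≤ n
  have hsub : Module.finrank ℂ ↥(LinearMap.range f ⊔ LinearMap.ker (f ^ j)) ≤ n := by
    have := Submodule.finrank_le (LinearMap.range f ⊔ LinearMap.ker (f ^ j))
    rwa [hfin] at this
  rw [hinf] at hsup
  omega

lemma finrank_quot_eq (j : ℕ) :
    Module.finrank ℂ ((Fin n → ℂ) ⧸ (LinearMap.range f ⊔ LinearMap.ker (f ^ j))) = e f j := by
  have h := Submodule.finrank_quotient_add_finrank (LinearMap.range f ⊔ LinearMap.ker (f ^ j))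
  have h2 := finrank_sup_eq f j
  have hfin : Module.finrank ℂ (Fin n → ℂ) = n := by
    simp [Module.finrank_fintype_fun_eq_card]
  rw [hfin] at h
  omega

lemma sum_e_add (d : ℕ) :
    (∑ t ∈ Finset.range d, e f t) + Module.finrank ℂ ↥(LinearMap.range (f ^ d)) = n := by
  induction d with
  | zero =>
      have h0 : LinearMap.range (f ^ 0) = ⊤ := by
        rw [pow_zero, Module.End.one_eq_id, LinearMap.range_id]
      rw [h0]
      simp [finrank_top, Module.finrank_fintype_fun_eq_card]
  | succ d ih =>
      rw [Finset.sum_range_succ]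
      have := finrank_range_step f d
      omega

lemma sum_e_le (d : ℕ) : (∑ t ∈ Finset.range d, e f t) ≤ n := by
  have := sum_e_add f d
  omega

/-- The auxiliary filtration submodule. -/
noncomputable def U (m j : ℕ) : Submodule ℂ ((Fin n → ℂ) →ₗ[ℂ] (Fin n → ℂ)) where
  carrier := {u | f * u = u * f ∧ LinearMap.ker (f ^ j) ≤ LinearMap.ker u ∧
    ∀ t, LinearMap.range (u * f ^ t) ≤ LinearMap.range (f ^ (m + j + t))}
  zero_mem' := by
    refine ⟨by simp, ?_, ?_⟩
    · intro x _; simp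
    · intro t
      rw [zero_mul, LinearMap.range_zero]
      exact bot_le
  add_mem' := by
    rintro a b ⟨ha1, ha2, ha3⟩ ⟨hb1, hb2, hb3⟩
    refine ⟨by rw [mul_add, add_mul, ha1, hb1], ?_, ?_⟩
    · intro x hx
      have h1 : a x = 0 := ha2 hx
      have h2 : b x = 0 := hb2 hx
      simp [LinearMap.mem_ker, LinearMap.add_apply, h1, h2]
    · intro t y hy
      obtain ⟨x, rfl⟩ := hy
      have hx : ((a + b) * f ^ t) x = (a * f ^ t) x + (b * f ^ t) x := by
        simp [Module.End.mul_apply, LinearMap.add_apply]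
      rw [hx]
      exact Submodule.add_mem _ (ha3 t (LinearMap.mem_range_self _ x))
        (hb3 t (LinearMap.mem_range_self _ x))
  smul_mem' := by
    rintro c a ⟨ha1, ha2, ha3⟩
    refine ⟨by rw [mul_smul_comm, smul_mul_assoc, ha1], ?_, ?_⟩
    · intro x hx
      have h1 : a x = 0 := ha2 hx
      simp [LinearMap.mem_ker, LinearMap.smul_apply, h1]
    · intro t y hy
      obtain ⟨x, rfl⟩ := hy
      have hx : ((c • a) * f ^ t) x = c • ((a * f ^ t) x) := by
        simp [Module.End.mul_apply, LinearMap.smul_apply]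
      rw [hx]
      exact Submodule.smul_mem _ _ (ha3 t (LinearMap.mem_range_self _ x))

lemma mem_U {u : (Fin n → ℂ) →ₗ[ℂ] (Fin n → ℂ)} {m j : ℕ} :
    u ∈ U f m j ↔ f * u = u * f ∧ LinearMap.ker (f ^ j) ≤ LinearMap.ker u ∧
      ∀ t, LinearMap.range (u * f ^ t) ≤ LinearMap.range (f ^ (m + j + t)) := Iff.rfl

lemma U_eq_bot {k : ℕ} (hk : f ^ k = 0) {m j : ℕ} (h : k ≤ m + j) : U f m j = ⊥ := by
  rw [eq_bot_iff]
  intro u hu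
  obtain ⟨h1, h2, h3⟩ := (mem_U f).mp hu
  have h0 := h3 0
  rw [pow_zero, mul_one] at h0
  have hz : f ^ (m + j + 0) = 0 := by
    have : m + j + 0 = k + (m + j - k) := by omega
    rw [this, pow_add, hk, zero_mul]
  rw [hz, LinearMap.range_zero, LinearMap.range_le_bot_iff] at h0
  simp [h0]

lemma U_step (m j : ℕ) :
    Module.finrank ℂ ↥(U f m j)
      ≤ e f j * e f (m + j) + Module.finrank ℂ ↥(U f m (j + 1)) := by
  classical
  set ρ : ((Fin n → ℂ) →ₗ[ℂ] (Fin n → ℂ)) →ₗ[ℂ] ((Fin n → ℂ) →ₗ[ℂ] (Fin n → ℂ)) :=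
    LinearMap.mulRight ℂ f with hρ
  have hrn := finrank_restrict' ρ (U f m j)
  -- the image lands in `U f m (j+1)`
  have hmap : (U f m j).map ρ ≤ U f m (j + 1) := by
    rintro w hw
    obtain ⟨u, hu, rfl⟩ := hw
    obtain ⟨h1, h2, h3⟩ := (mem_U f).mp hu
    have hρu : ρ u = u * f := rfl
    rw [hρu]
    refine (mem_U f).mpr ⟨?_, ?_, ?_⟩
    · rw [← mul_assoc, h1]
    · intro x hx
      have hfx : f x ∈ LinearMap.ker (f ^ j) := by
        rw [LinearMap.mem_ker]
        have hxx : (f ^ j) (f x) = (f ^ (j + 1)) x := by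
          rw [pow_succ, Module.End.mul_apply]
        rw [hxx]
        exact hx
      have : u (f x) = 0 := h2 hfx
      simp [LinearMap.mem_ker, Module.End.mul_apply, this]
    · intro t
      have hasc : u * f * f ^ t = u * f ^ (t + 1) := by
        rw [mul_assoc, ← pow_succ']
      rw [hasc]
      have hidx : m + (j + 1) + t = m + j + (t + 1) := by omega
      rw [hidx]
      exact h3 (t + 1)
  have hmapfr : Module.finrank ℂ ↥((U f m j).map ρ) ≤ Module.finrank ℂ ↥(U f m (j + 1)) :=
    Submodule.finrank_mono hmap
  -- now bound the kernel
  set K := LinearMap.ker ρ ⊓ U f m j with hK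
  set E := LinearMap.ker f ⊓ LinearMap.range (f ^ (m + j)) with hE
  set Q := LinearMap.range f ⊔ LinearMap.ker (f ^ j) with hQ
  have huf : ∀ u : ↥K, ((u : (Fin n → ℂ) →ₗ[ℂ] (Fin n → ℂ))) * f = 0 := by
    intro u
    have h := (Submodule.mem_inf.mp u.2).1
    rwa [LinearMap.mem_ker] at h
  have hcomm : ∀ u : ↥K, f * (u : (Fin n → ℂ) →ₗ[ℂ] (Fin n → ℂ))
      = (u : (Fin n → ℂ) →ₗ[ℂ] (Fin n → ℂ)) * f := fun u => ((mem_U f).mp (Submodule.mem_inf.mp u.2).2).1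
  have pa : ∀ (u : ↥K) (x : Fin n → ℂ),
      ((u : (Fin n → ℂ) →ₗ[ℂ] (Fin n → ℂ))) x ∈ E := by
    intro u x
    obtain ⟨h1, h2, h3⟩ := (mem_U f).mp (Submodule.mem_inf.mp u.2).2
    refine Submodule.mem_inf.mpr ⟨?_, ?_⟩
    · rw [LinearMap.mem_ker]
      have hfa : f (((u : (Fin n → ℂ) →ₗ[ℂ] (Fin n → ℂ))) x)
          = ((f * (u : (Fin n → ℂ) →ₗ[ℂ] (Fin n → ℂ))) x) := rfl
      rw [hfa, h1, huf u]
      rfl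
    · have h0 := h3 0
      rw [pow_zero, mul_one, add_zero] at h0
      exact h0 (LinearMap.mem_range_self _ x)
  have vanish : ∀ u : ↥K, Q ≤ LinearMap.ker
      (LinearMap.codRestrict E ((u : (Fin n → ℂ) →ₗ[ℂ] (Fin n → ℂ))) (pa u)) := by
    intro u
    rw [LinearMap.ker_codRestrict]
    obtain ⟨h1, h2, h3⟩ := (mem_U f).mp (Submodule.mem_inf.mp u.2).2
    refine sup_le ?_ h2
    rintro y hy
    obtain ⟨x, rfl⟩ := hy
    rw [LinearMap.mem_ker]
    have hux : ((u : (Fin n → ℂ) →ₗ[ℂ] (Fin n → ℂ))) (f x)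
        = (((u : (Fin n → ℂ) →ₗ[ℂ] (Fin n → ℂ))) * f) x := rfl
    rw [hux, huf u]
    rfl
  let Φfun : ↥K → (((Fin n → ℂ) ⧸ Q) →ₗ[ℂ] ↥E) := fun u =>
    Q.liftQ (LinearMap.codRestrict E _ (pa u)) (vanish u)
  have Φcomp : ∀ (u : ↥K) (x : Fin n → ℂ),
      ((Φfun u) (Q.mkQ x) : Fin n → ℂ)
        = ((u : (Fin n → ℂ) →ₗ[ℂ] (Fin n → ℂ))) x := by
    intro u x
    simp [Φfun, Submodule.liftQ_apply, LinearMap.codRestrict_apply]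
  have Φadd : ∀ u v : ↥K, Φfun (u + v) = Φfun u + Φfun v := by
    intro u v
    refine Submodule.linearMap_qext _ (LinearMap.ext fun x => Subtype.ext ?_)
    simp only [LinearMap.comp_apply, LinearMap.add_apply, Submodule.coe_add]
    rw [Φcomp (u + v) x, Φcomp u x, Φcomp v x]
    simp [Submodule.coe_add, LinearMap.add_apply]
  have Φsmul : ∀ (c : ℂ) (u : ↥K), Φfun (c • u) = c • Φfun u := by
    intro c u
    refine Submodule.linearMap_qext _ (LinearMap.ext fun x => Subtype.ext ?_)
    simp only [LinearMap.comp_apply, LinearMap.smul_apply, Submodule.coe_smul]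
    rw [Φcomp (c • u) x, Φcomp u x]
    simp [Submodule.coe_smul, LinearMap.smul_apply]
  let Φ : ↥K →ₗ[ℂ] (((Fin n → ℂ) ⧸ Q) →ₗ[ℂ] ↥E) :=
    { toFun := Φfun, map_add' := Φadd, map_smul' := Φsmul }
  have hkerΦ : LinearMap.ker Φ = ⊥ := by
    rw [LinearMap.ker_eq_bot']
    intro u hu
    have hzero : ((u : (Fin n → ℂ) →ₗ[ℂ] (Fin n → ℂ))) = 0 := by
      refine LinearMap.ext fun x => ?_
      have h1 := Φcomp u x
      have h2 : Φfun u = 0 := hu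
      rw [h2] at h1
      simpa using h1.symm
    exact Subtype.ext hzero
  have Φinj : Function.Injective Φ := LinearMap.ker_eq_bot (M := ↥K) (M₂ := ((Fin n → ℂ) ⧸ Q) →ₗ[ℂ] ↥E) |>.mp hkerΦ
  have hKle : Module.finrank ℂ ↥K
      ≤ Module.finrank ℂ (((Fin n → ℂ) ⧸ Q) →ₗ[ℂ] ↥E) :=
    LinearMap.finrank_le_finrank_of_injective Φinj
  have hhom : Module.finrank ℂ (((Fin n → ℂ) ⧸ Q) →ₗ[ℂ] ↥E) = e f j * e f (m + j) := by
    rw [Module.finrank_linearMap, finrank_quot_eq f j]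
    rfl
  rw [hhom] at hKle
  omega

lemma U_bound {k : ℕ} (hk : f ^ k = 0) (m : ℕ) :
    ∀ d j, k ≤ j + d →
      Module.finrank ℂ ↥(U f m j) ≤ ∑ t ∈ Finset.Ico j (j + d), e f t * e f (m + t) := by
  intro d
  induction d with
  | zero =>
      intro j hj
      rw [U_eq_bot f hk (show k ≤ m + j by omega)]
      simp
  | succ d ih =>
      intro j hj
      by_cases hkj : k ≤ j
      · rw [U_eq_bot f hk (show k ≤ m + j by omega)]
        simp
      · have h1 := U_step f m j
        have h2 := ih (j + 1) (by omega)
        have h4 : j + 1 + d = j + (d + 1) := by omega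
        rw [h4] at h2
        have h3 : ∑ t ∈ Finset.Ico j (j + (d + 1)), e f t * e f (m + t)
            = e f j * e f (m + j)
              + ∑ t ∈ Finset.Ico (j + 1) (j + (d + 1)), e f t * e f (m + t) := by
          rw [Finset.sum_eq_sum_Ico_succ_bot (show j < j + (d + 1) by omega)]
        omega

lemma U_total {k : ℕ} (hk : f ^ k = 0) (m : ℕ) :
    m * Module.finrank ℂ ↥(U f m 0) ≤ n * n := by
  have h0 := U_bound f hk m k 0 (by omega)
  rw [zero_add, ← Finset.range_eq_Ico] at h0
  have hterm : ∀ t : ℕ, m * e f (m + t) ≤ n := by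
    intro t
    have hc : ∀ s ∈ Finset.Ico (t + 1) (t + m + 1), e f (m + t) ≤ e f s := by
      intro s hs
      rw [Finset.mem_Ico] at hs
      exact e_antitone f s (m + t) (by omega)
    have hcard := Finset.card_nsmul_le_sum (Finset.Ico (t + 1) (t + m + 1))
      (fun s => e f s) (e f (m + t)) hc
    rw [Nat.card_Ico, smul_eq_mul] at hcard
    have hm' : t + m + 1 - (t + 1) = m := by omega
    rw [hm'] at hcard
    have hsub : ∑ s ∈ Finset.Ico (t + 1) (t + m + 1), e f s
        ≤ ∑ s ∈ Finset.range (t + m + 1), e f s := by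
      apply Finset.sum_le_sum_of_subset
      intro s hs
      rw [Finset.mem_Ico] at hs
      rw [Finset.mem_range]
      omega
    have hle := sum_e_le f (t + m + 1)
    omega
  calc m * Module.finrank ℂ ↥(U f m 0)
      ≤ m * ∑ t ∈ Finset.range k, e f t * e f (m + t) := Nat.mul_le_mul_left m h0
    _ = ∑ t ∈ Finset.range k, e f t * (m * e f (m + t)) := by
        rw [Finset.mul_sum]
        exact Finset.sum_congr rfl fun t _ => by ring
    _ ≤ ∑ t ∈ Finset.range k, e f t * n :=
        Finset.sum_le_sum fun t _ => Nat.mul_le_mul_left _ (hterm t)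
    _ = (∑ t ∈ Finset.range k, e f t) * n := (Finset.sum_mul _ _ _).symm
    _ ≤ n * n := Nat.mul_le_mul_right n (sum_e_le f k)

lemma pow_mul_mem_U (m : ℕ) (b : (Fin n → ℂ) →ₗ[ℂ] (Fin n → ℂ)) (hb : f * b = b * f) :
    f ^ m * b ∈ U f m 0 := by
  have hc : Commute f b := hb
  refine (mem_U f).mpr ⟨?_, ?_, ?_⟩
  · exact (((Commute.refl f).pow_right m).mul_right hc).eq
  · intro x hx
    rw [LinearMap.mem_ker] at hx ⊢
    rw [pow_zero] at hx
    have hx0 : x = 0 := by simpa using hx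
    rw [hx0, map_zero]
  · intro t
    have h1 : b * f ^ t = f ^ t * b := (hc.symm.pow_right t).eq
    have h2 : f ^ m * b * f ^ t = f ^ (m + 0 + t) * b := by
      rw [mul_assoc, h1, ← mul_assoc, ← pow_add]
      norm_num
    rw [h2, Module.End.mul_eq_comp]
    exact LinearMap.range_comp_le_range _ _

theorem main_aux {k : ℕ} (hk : f ^ k = 0) (m : ℕ) :
    m * Module.finrank ℂ ↥(Submodule.span ℂ {g : (Fin n → ℂ) →ₗ[ℂ] (Fin n → ℂ) |
      ∃ b, f * b = b * f ∧ g = f ^ m * b}) ≤ n * n := by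
  have hle : Submodule.span ℂ {g : (Fin n → ℂ) →ₗ[ℂ] (Fin n → ℂ) |
      ∃ b, f * b = b * f ∧ g = f ^ m * b} ≤ U f m 0 := by
    rw [Submodule.span_le]
    rintro g ⟨b, hb, rfl⟩
    exact pow_mul_mem_U f m b hb
  have h1 := Submodule.finrank_mono hle
  exact le_trans (Nat.mul_le_mul_left m h1) (U_total f hk m)

end DimSpanAux

/-- If `A` is a nilpotent `n × n` complex matrix and `m ≥ 1`, then the span of
`{ A^m * B : B commutes with A }` has dimension at most `n² / m`. -/
theorem dim_span_pow_mul_centralizer_le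
    (n : ℕ) (A : Matrix (Fin n) (Fin n) ℂ) (hA : IsNilpotent A)
    (m : ℕ) (hm : 1 ≤ m) :
    (Module.finrank ℂ
        ↥(Submodule.span ℂ {M : Matrix (Fin n) (Fin n) ℂ |
            ∃ B : Matrix (Fin n) (Fin n) ℂ, A * B = B * A ∧ M = A ^ m * B}) : ℝ) ≤
      (n : ℝ) ^ 2 / (m : ℝ) := by
  classical
  obtain ⟨k, hk⟩ := hA
  set Φ : Matrix (Fin n) (Fin n) ℂ ≃ₐ[ℂ] ((Fin n → ℂ) →ₗ[ℂ] (Fin n → ℂ)) :=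
    Matrix.toLinAlgEquiv' with hΦ
  set f : (Fin n → ℂ) →ₗ[ℂ] (Fin n → ℂ) := Φ A with hf
  have hfk : f ^ k = 0 := by
    rw [hf, ← map_pow, hk, map_zero]
  set S : Set (Matrix (Fin n) (Fin n) ℂ) :=
    {M | ∃ B : Matrix (Fin n) (Fin n) ℂ, A * B = B * A ∧ M = A ^ m * B} with hS
  -- transfer the span through the algebra equivalence
  have hfr : Module.finrank ℂ ↥(Submodule.span ℂ S)
      = Module.finrank ℂ ↥(Submodule.span ℂ ((Φ.toLinearEquiv : Matrix (Fin n) (Fin n) ℂ →ₗ[ℂ]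
          ((Fin n → ℂ) →ₗ[ℂ] (Fin n → ℂ))) '' S)) := by
    rw [← Submodule.map_span]
    exact (LinearEquiv.finrank_map_eq Φ.toLinearEquiv (Submodule.span ℂ S)).symm
  -- the image of the span is contained in the span considered in `main_aux`
  have himg : (Φ.toLinearEquiv : Matrix (Fin n) (Fin n) ℂ →ₗ[ℂ]
        ((Fin n → ℂ) →ₗ[ℂ] (Fin n → ℂ))) '' S
      ⊆ {g : (Fin n → ℂ) →ₗ[ℂ] (Fin n → ℂ) | ∃ b, f * b = b * f ∧ g = f ^ m * b} := by
    rintro g ⟨M, ⟨B, hB, rfl⟩, rfl⟩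
    refine ⟨Φ B, ?_, ?_⟩
    · rw [hf, ← map_mul, ← map_mul, hB]
    · show Φ (A ^ m * B) = f ^ m * Φ B
      rw [hf, map_mul, map_pow]
  have hspan_le : Module.finrank ℂ ↥(Submodule.span ℂ ((Φ.toLinearEquiv :
        Matrix (Fin n) (Fin n) ℂ →ₗ[ℂ] ((Fin n → ℂ) →ₗ[ℂ] (Fin n → ℂ))) '' S))
      ≤ Module.finrank ℂ ↥(Submodule.span ℂ {g : (Fin n → ℂ) →ₗ[ℂ] (Fin n → ℂ) |
          ∃ b, f * b = b * f ∧ g = f ^ m * b}) :=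
    Submodule.finrank_mono (Submodule.span_mono himg)
  have hmain := DimSpanAux.main_aux f hfk m
  set F := Module.finrank ℂ ↥(Submodule.span ℂ S) with hF
  have hnat : m * F ≤ n * n := by
    rw [hfr]
    exact le_trans (Nat.mul_le_mul_left m hspan_le) hmain
  have hm0 : (0 : ℝ) < (m : ℝ) := by
    exact_mod_cast Nat.lt_of_lt_of_le Nat.zero_lt_one hm
  rw [le_div_iff₀ hm0]
  calc (F : ℝ) * (m : ℝ) = ((m * F : ℕ) : ℝ) := by push_cast; ring
    _ ≤ ((n * n : ℕ) : ℝ) := by exact_mod_cast hnat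
    _ = (n : ℝ) ^ 2 := by push_cast; ring
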